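/- Let T be an n×n positive semidefinite matrix and L_i = a⁻¹ e_i e_iᵀ with a > 0, where e_i is the i-th standard basis vector. If M and M + L_j are invertible and positive definite with M ⪰ 0, then det(M + L_i)·det(M + L_j) ≥ det(M)·det(M + L_i + L_j). -/

import Mathlib

open Matrix

lemma det_add_smul_stdBasis {n : ℕ} (M : Matrix (Fin n) (Fin n) ℝ) (t : ℝ) (i : Fin n) :
    (M + t • Matrix.single i i (1 : ℝ)).det = M.det + t * (Mᵀ.adjugate i i) := by
  have h : M + t • Matrix.single i i (1 : ℝ) =
      M.updateCol i ((fun k => M k i) + t • (Pi.single i (1:ℝ) : Fin n → ℝ)) := by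
    ext k l
    rcases eq_or_ne l i with hl | hl
    · subst hl
      rcases eq_or_ne k l with hk | hk <;>
        simp [Matrix.updateCol_apply, Matrix.single, hk, Pi.single_apply,
          eq_comm]
    · simp [Matrix.updateCol_apply, hl, Matrix.single, Ne.symm hl]
  rw [h, Matrix.det_updateCol_add, Matrix.det_updateCol_smul,
    Matrix.updateCol_eq_self, ← Matrix.cramer_apply]
  simp [Matrix.adjugate_def]

lemma posdef_diag_pos {n : ℕ} {A : Matrix (Fin n) (Fin n) ℝ} (hA : A.PosDef) (i : Fin n) :
    0 < A i i := by
  have hx : (Pi.single i 1 : Fin n → ℝ) ≠ 0 := by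
    intro h
    have := congrFun h i
    simp at this
  have := hA.dotProduct_mulVec_pos hx
  simpa [dotProduct, Matrix.mulVec, Pi.single_apply] using this

lemma posdef_det_update {n : ℕ} {A : Matrix (Fin n) (Fin n) ℝ} (hA : A.PosDef) (t : ℝ)
    (i : Fin n) :
    (A + t • Matrix.single i i (1 : ℝ)).det = A.det * (1 + t * A⁻¹ i i) := by
  have hAT : Aᵀ = A := by
    have := hA.1
    exact (by simpa using this : A.IsSymm)
  have hdet : A.det ≠ 0 := hA.det_pos.ne'
  have hadj : A.adjugate i i = A.det * A⁻¹ i i := by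
    have h := Matrix.inv_def A
    have : A⁻¹ i i = (A.det)⁻¹ * A.adjugate i i := by
      rw [h, Ring.inverse_eq_inv]
      simp [Matrix.smul_apply]
    rw [this]
    field_simp
  rw [det_add_smul_stdBasis, hAT, hadj]
  ring

lemma sherman {n : ℕ} {M : Matrix (Fin n) (Fin n) ℝ} (hM : M.PosDef) {a : ℝ} (ha : 0 < a)
    (j : Fin n) :
    (M + a⁻¹ • Matrix.single j j (1 : ℝ))⁻¹ =
      M⁻¹ - (a + M⁻¹ j j)⁻¹ • (M⁻¹ * Matrix.single j j (1 : ℝ) * M⁻¹) := by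
  set c := M⁻¹ with hc
  set E := Matrix.single j j (1 : ℝ) with hE
  have hcjj : 0 < c j j := posdef_diag_pos hM.inv j
  have hden : a + c j j ≠ 0 := by positivity
  have hMc : M * c = 1 := Matrix.mul_nonsing_inv M hM.det_pos.ne'.isUnit
  have hEcE : E * c * E = (c j j) • E := by
    ext k l
    rcases eq_or_ne l j with hl | hl
    · subst hl
      rcases eq_or_ne k l with hk | hk
      · subst hk; simp [hE]
      · simp [hE, hk, Ne.symm hk]
    · simp [hE, hl, Ne.symm hl]
  apply Matrix.inv_eq_right_inv
  have expand : (M + a⁻¹ • E) * (c - (a + c j j)⁻¹ • (c * E * c)) =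
      M * c - (a + c j j)⁻¹ • (M * c * E * c) + a⁻¹ • (E * c)
        - ((a + c j j)⁻¹ * a⁻¹) • (E * c * E * c) := by
    simp only [Matrix.mul_sub, Matrix.add_mul, Matrix.smul_mul, Matrix.mul_smul,
      smul_smul, smul_add, Matrix.mul_add, Matrix.mul_assoc]
    abel
  have h2 : E * c * E * c = (c j j) • (E * c) := by
    rw [hEcE, Matrix.smul_mul]
  rw [expand, hMc, h2, Matrix.one_mul, smul_smul]
  have hcoef : (a + c j j)⁻¹ • (E * c) + ((a + c j j)⁻¹ * a⁻¹ * c j j) • (E * c)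
      = a⁻¹ • (E * c) := by
    rw [← add_smul]
    congr 1
    field_simp
  have hre : (1 : Matrix (Fin n) (Fin n) ℝ) - (a + c j j)⁻¹ • (E * c) + a⁻¹ • (E * c)
        - ((a + c j j)⁻¹ * a⁻¹ * c j j) • (E * c)
      = 1 + (a⁻¹ • (E * c)
        - ((a + c j j)⁻¹ • (E * c) + ((a + c j j)⁻¹ * a⁻¹ * c j j) • (E * c))) := by
    abel
  rw [hre, hcoef]
  simp

theorem det_rank_one_update_ineq {n : ℕ} (M : Matrix (Fin n) (Fin n) ℝ) (a : ℝ) (ha : 0 < a)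
    (i j : Fin n) (hM : M.PosDef)
    (hMj : (M + a⁻¹ • Matrix.single j j (1 : ℝ)).PosDef) :
    (M + a⁻¹ • Matrix.single j j (1 : ℝ)).det *
      (M + a⁻¹ • Matrix.single i i (1 : ℝ)).det ≥
    M.det *
      (M + a⁻¹ • Matrix.single i i (1 : ℝ) + a⁻¹ • Matrix.single j j (1 : ℝ)).det := by
  set c := M⁻¹ with hc
  set B := M + a⁻¹ • Matrix.single j j (1 : ℝ) with hB
  have hcjj : 0 < c j j := posdef_diag_pos hM.inv j
  have hs : 0 < (a + c j j)⁻¹ := by positivity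
  have hsym : c j i = c i j := by
    have h := hM.inv.1
    calc c j i = (cᴴ) j i := by rw [h]
    _ = c i j := by simp [Matrix.conjTranspose_apply]
  have hcEc : (c * Matrix.single j j (1 : ℝ) * c) i i = c i j * c j i := by
    simp [Matrix.mul_apply, Matrix.single, ite_and]
  have hdii : B⁻¹ i i = c i i - (a + c j j)⁻¹ * (c i j * c j i) := by
    rw [hB, sherman hM ha j]
    simp [Matrix.sub_apply, Matrix.smul_apply, ← hc, hcEc]
  have hdiff : B⁻¹ i i ≤ c i i := by
    rw [hdii, hsym]
    nlinarith [sq_nonneg (c i j), hs]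
  have hdM : 0 < M.det := hM.det_pos
  have hdB : 0 < B.det := hMj.det_pos
  have e1 : (M + a⁻¹ • Matrix.single i i (1 : ℝ)).det = M.det * (1 + a⁻¹ * c i i) :=
    posdef_det_update hM a⁻¹ i
  have e3 : (M + a⁻¹ • Matrix.single i i (1 : ℝ) + a⁻¹ • Matrix.single j j (1 : ℝ)).det
      = B.det * (1 + a⁻¹ * B⁻¹ i i) := by
    rw [add_right_comm, ← hB]
    exact posdef_det_update hMj a⁻¹ i
  rw [e1, e3]
  have ha' : 0 < a⁻¹ := by positivity
  nlinarith [mul_pos hdM hdB, mul_nonneg (mul_pos hdM hdB).le (sub_nonneg.2 hdiff),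
    mul_nonneg (mul_nonneg (mul_pos hdM hdB).le (sub_nonneg.2 hdiff)) ha'.le]
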